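/- arXiv:2605.09010 — 14 statements merged into one kernel-verified Lean document; each statement's English description precedes it below -/
import Mathlib

section
/- Let u, v be ultrafilters on ℕ with v strongly dividing u. Then u ∈ MAX if and only if u/v ∈ MAX, where MAX is the set of ultrafilters containing nℕ for every n. -/
/-- x·A = {x*a : a ∈ A} in ℕ+. -/
def pmul (x : ℕ+) (A : Set ℕ+) : Set ℕ+ := (x * ·) '' A

/-- xℕ, the set of positive multiples of x. -/
def mulsOf (x : ℕ+) : Set ℕ+ := {n | x ∣ n}

/-- D(u) = {x : xℕ ∈ u}. -/
def Dset (u : Ultrafilter ℕ+) : Set ℕ+ := {x | mulsOf x ∈ u}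

/-- v strongly divides u: D(u) ∈ v. -/
def SDvd (v u : Ultrafilter ℕ+) : Prop := Dset u ∈ v

/-- Membership in the quotient u/v:  A ∈ u/v iff {x : x·A ∈ u} ∈ v. -/
def quotMem (u v : Ultrafilter ℕ+) (A : Set ℕ+) : Prop := {x | pmul x A ∈ u} ∈ v

attribute [local instance] Ultrafilter.mul

lemma pmul_mulsOf (x n : ℕ+) : pmul x (mulsOf n) = mulsOf (x * n) := by
  ext m
  constructor
  · rintro ⟨a, ha, rfl⟩
    exact mul_dvd_mul_left x ha
  · rintro ⟨k, rfl⟩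
    exact ⟨n * k, Dvd.intro k rfl, (mul_assoc x n k).symm⟩

theorem stmt0 (u v : Ultrafilter ℕ+) (h : SDvd v u) :
    (∀ n : ℕ+, mulsOf n ∈ u) ↔ (∀ n : ℕ+, quotMem u v (mulsOf n)) := by
  constructor
  · intro H n
    unfold quotMem
    have heq : {x : ℕ+ | pmul x (mulsOf n) ∈ u} = Set.univ := by
      ext x
      simp only [Set.mem_setOf_eq, Set.mem_univ, iff_true]
      rw [pmul_mulsOf]
      exact H (x * n)
    rw [heq]
    exact Filter.univ_mem
  · intro H n
    obtain ⟨x, hx⟩ := Ultrafilter.nonempty_of_mem (H n)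
    have hsub : pmul x (mulsOf n) ⊆ mulsOf n := by
      rintro m ⟨a, ha, rfl⟩
      exact ha.mul_left x
    exact u.toFilter.mem_of_superset hx hsub
end

section
/- Let u, v, w be ultrafilters on ℕ. If v strongly divides u and w = u·t for some ultrafilter t (u right-divides w in the semigroup (βℕ,·)), then v strongly divides w. -/
attribute [local instance] Ultrafilter.mul

theorem stmt1 (u v w t : Ultrafilter ℕ+) (h : SDvd v u) (hw : w = u * t) :
    SDvd v w := by
  subst hw
  refine v.toFilter.mem_of_superset h ?_
  intro x hx
  have : ∀ᶠ m in ↑(u * t), m ∈ mulsOf x := by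
    rw [Ultrafilter.eventually_mul]
    refine Filter.Eventually.mono hx fun a ha => Filter.Eventually.of_forall fun b => ?_
    exact ha.mul_right b
  exact this
end

section
/- Let u, v, w be ultrafilters on ℕ. If v strongly divides u and w = t·u for some ultrafilter t (u left-divides w in (βℕ,·)), then v strongly divides w. -/
attribute [local instance] Ultrafilter.mul

theorem stmt2 (u v w t : Ultrafilter ℕ+) (h : SDvd v u) (hw : w = t * u) :
    SDvd v w := by
  subst hw
  refine Filter.mem_of_superset h ?_
  intro x hx
  show mulsOf x ∈ t * u
  have : ∀ᶠ a in (t : Filter ℕ+), ∀ᶠ b in (u : Filter ℕ+), a * b ∈ mulsOf x := by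
    filter_upwards with a
    exact Filter.mem_of_superset hx fun b hb => hb.mul_left a
  exact (Ultrafilter.eventually_mul t u (· ∈ mulsOf x)).mpr this
end

section
/- Let u be a self-divisible ultrafilter on ℕ (i.e., D(u) ∈ u). Then D(u·(u/u)) ⊆ D(u·u). -/
attribute [local instance] Ultrafilter.mul

theorem stmt3 (u : Ultrafilter ℕ+) (hu : Dset u ∈ u)
    (q : Ultrafilter ℕ+) (hq : ∀ A : Set ℕ+, A ∈ q ↔ quotMem u u A) :
    Dset (u * q) ⊆ Dset (u * u) := by
  intro x hx
  have hx' : ∀ᶠ a in (u : Filter ℕ+), ∀ᶠ b in (q : Filter ℕ+), x ∣ a * b := by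
    have := (Ultrafilter.eventually_mul u q (fun n => x ∣ n)).mp hx
    exact this
  have key : ∀ᶠ a in (u : Filter ℕ+), ∀ᶠ b in (u : Filter ℕ+), x ∣ a * b := by
    filter_upwards [hx'] with a ha
    -- ha : {b | x ∣ a * b} ∈ q
    have hq' : quotMem u u {b | x ∣ a * b} := (hq _).mp ha
    -- the set {y | pmul y S ∈ u} ∈ u, hence nonempty
    obtain ⟨y, hy⟩ := Ultrafilter.nonempty_of_mem hq'
    have hsub : pmul y {b | x ∣ a * b} ⊆ {b | x ∣ a * b} := by
      rintro _ ⟨b, hb, rfl⟩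
      have : x ∣ a * b := hb
      simpa [mul_comm, mul_assoc, mul_left_comm] using this.mul_left y
    exact u.toFilter.mem_of_superset hy hsub
  exact (Ultrafilter.eventually_mul u u (fun n => x ∣ n)).mpr key
end

section
/- Let u be a self-divisible ultrafilter on ℕ. Then D((u/u)·u) ⊆ D(u·u). -/
attribute [local instance] Ultrafilter.mul

lemma mem_mul' (v w : Ultrafilter ℕ+) (A : Set ℕ+) :
    A ∈ v * w ↔ {a | {b | a * b ∈ A} ∈ w} ∈ v := by
  have := Ultrafilter.eventually_mul v w (· ∈ A)
  simpa [Filter.Eventually, Ultrafilter.mem_coe] using this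

theorem stmt4 (u : Ultrafilter ℕ+) (hu : Dset u ∈ u)
    (q : Ultrafilter ℕ+) (hq : ∀ A : Set ℕ+, A ∈ q ↔ quotMem u u A) :
    Dset (q * u) ⊆ Dset (u * u) := by
  intro x hx
  simp only [Dset, Set.mem_setOf_eq, mem_mul'] at hx ⊢
  set S : Set ℕ+ := {a | {b | a * b ∈ mulsOf x} ∈ u} with hS
  have hq' : {y | pmul y S ∈ u} ∈ u := (hq S).mp hx
  obtain ⟨y, hy⟩ := Ultrafilter.nonempty_of_mem hq'
  have hsub : pmul y S ⊆ S := by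
    rintro _ ⟨a, ha, rfl⟩
    have ha' : {b | a * b ∈ mulsOf x} ∈ u := ha
    refine Filter.mem_of_superset ha' ?_
    intro b hb
    simp only [Set.mem_setOf_eq, mulsOf] at hb ⊢
    calc x ∣ a * b := hb
    _ ∣ y * a * b := by rw [mul_assoc]; exact dvd_mul_left _ y
  exact Filter.mem_of_superset hy hsub
end

section
/- There exists a nonprincipal ultrafilter u on ℕ that is a multiplicative idempotent (u·u = u), is self-divisible (D(u) ∈ u), and is not in MAX (there exists n with nℕ ∉ u). In fact any idempotent ultrafilter containing {2^n : n ∈ ℕ} works. -/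
attribute [local instance] Ultrafilter.mul

lemma FP_const_two {x : ℕ+} (hx : x ∈ Hindman.FP (Stream'.const (2 : ℕ+))) :
    ∃ n : ℕ+, x = 2 ^ (n : ℕ) := by
  have key : ∀ (a : Stream' ℕ+) (x : ℕ+), x ∈ Hindman.FP a →
      a = Stream'.const 2 → ∃ n : ℕ+, x = 2 ^ (n : ℕ) := by
    intro a x h
    induction h with
    | head' a => intro ha; exact ⟨1, by simp [ha, Stream'.const]⟩
    | tail' a m h ih =>
        intro ha
        exact ih (by rw [ha]; rfl)
    | cons' a m h ih =>
        intro ha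
        obtain ⟨n, hn⟩ := ih (by rw [ha]; rfl)
        refine ⟨n + 1, ?_⟩
        rw [hn, ha]
        show (2 : ℕ+) * 2 ^ (n : ℕ) = 2 ^ ((n + 1 : ℕ+) : ℕ)
        rw [PNat.add_coe, pow_add, PNat.one_coe, pow_one]
        ring
  exact key _ _ hx rfl

lemma part2 (u : Ultrafilter ℕ+) (hid : u * u = u)
    (hM : {x : ℕ+ | ∃ n : ℕ+, x = 2 ^ (n : ℕ)} ∈ u) :
    (¬ ∃ n : ℕ+, u = pure n) ∧ Dset u ∈ u ∧ ∃ n : ℕ+, mulsOf n ∉ u := by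
  have hnp : ¬ ∃ n : ℕ+, u = pure n := by
    rintro ⟨n, rfl⟩
    have h1 : n ∈ {x : ℕ+ | ∃ m : ℕ+, x = 2 ^ (m : ℕ)} := hM
    obtain ⟨m, hm⟩ := h1
    have h2 : n * n = n := by
      have := hid
      rw [show ((pure n : Ultrafilter ℕ+) * pure n) = pure (n * n) from rfl] at this
      exact Ultrafilter.pure_injective this
    have : n = 1 := by
      have := mul_right_cancel (a := n) (b := n) (c := 1) (by simpa using h2)
      exact this
    rw [this] at hm
    have : (1 : ℕ) = 2 ^ (m : ℕ) := congrArg (PNat.val) hm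
    have hm1 : 1 ≤ (m : ℕ) := m.one_le
    have : (2:ℕ) ^ (m:ℕ) ≥ 2 := by
      calc (2:ℕ) ^ (m:ℕ) ≥ 2 ^ 1 := Nat.pow_le_pow_right (by norm_num) hm1
        _ = 2 := by norm_num
    omega
  have hcof : ∀ s : Set ℕ+, s.Finite → sᶜ ∈ u := by
    intro s hs
    by_contra h
    rw [Ultrafilter.compl_mem_iff_notMem, not_not] at h
    obtain ⟨a, _, ha⟩ := Ultrafilter.eq_pure_of_finite_mem hs h
    exact hnp ⟨a, ha⟩
  have hD : Dset u ∈ u := by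
    apply u.toFilter.mem_of_superset hM
    rintro x ⟨n, rfl⟩
    show mulsOf (2 ^ (n:ℕ)) ∈ u
    have hfin : Set.Finite {y : ℕ+ | y < 2 ^ (n:ℕ)} := Set.finite_Iio _
    have h2 : {y : ℕ+ | y < 2 ^ (n:ℕ)}ᶜ ∈ u := hcof _ hfin
    have : {x : ℕ+ | ∃ m : ℕ+, x = 2 ^ (m : ℕ)} ∩ {y : ℕ+ | y < 2 ^ (n:ℕ)}ᶜ
        ⊆ mulsOf (2 ^ (n:ℕ)) := by
      rintro y ⟨⟨m, rfl⟩, hy⟩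
      simp only [Set.mem_compl_iff, Set.mem_setOf_eq, not_lt] at hy
      show (2:ℕ+) ^ (n:ℕ) ∣ 2 ^ (m:ℕ)
      have hy' : (2:ℕ) ^ (n:ℕ) ≤ 2 ^ (m:ℕ) := by exact_mod_cast hy
      have hnm : (n:ℕ) ≤ (m:ℕ) := (Nat.pow_le_pow_iff_right (by norm_num)).mp hy'
      exact pow_dvd_pow 2 hnm
    exact u.toFilter.mem_of_superset (Filter.inter_mem hM h2) this
  refine ⟨hnp, hD, ⟨3, ?_⟩⟩
  intro h3
  have : {x : ℕ+ | ∃ m : ℕ+, x = 2 ^ (m : ℕ)} ∩ mulsOf 3 ∈ u := Filter.inter_mem hM h3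
  obtain ⟨x, ⟨m, rfl⟩, hd⟩ := Ultrafilter.nonempty_of_mem this
  have hd' : (3:ℕ) ∣ 2 ^ (m:ℕ) := by
    have := (PNat.dvd_iff ..).mp hd
    simpa using this
  have := Nat.Coprime.eq_one_of_dvd (Nat.Coprime.pow_right _ (by norm_num)) hd'
  omega

theorem stmt6 :
    (∃ u : Ultrafilter ℕ+, (¬ ∃ n : ℕ+, u = pure n) ∧ u * u = u ∧ Dset u ∈ u ∧
      ∃ n : ℕ+, mulsOf n ∉ u) ∧
    (∀ u : Ultrafilter ℕ+, u * u = u → {x : ℕ+ | ∃ n : ℕ+, x = 2 ^ (n : ℕ)} ∈ u →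
      (¬ ∃ n : ℕ+, u = pure n) ∧ Dset u ∈ u ∧ ∃ n : ℕ+, mulsOf n ∉ u) := by
  constructor
  · obtain ⟨U, hidem, hFP⟩ :=
      Hindman.exists_idempotent_ultrafilter_le_FP (Stream'.const (2 : ℕ+))
    have hM : {x : ℕ+ | ∃ n : ℕ+, x = 2 ^ (n : ℕ)} ∈ U := by
      apply U.toFilter.mem_of_superset hFP
      intro x hx
      exact FP_const_two hx
    obtain ⟨h1, h2, h3⟩ := part2 U hidem hM
    exact ⟨U, h1, hidem, h2, h3⟩
  · intro u h1 h2
    exact part2 u h1 h2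
end

section
/- A set A ⊆ ℕ is a multiplicative Δ-set (i.e., there is a sequence (x_n) in ℕ with x_n dividing x_m for n < m and {x_m / x_n : m > n} ⊆ A) if and only if A ∈ u/u for some self-divisible ultrafilter u on ℕ. -/
attribute [local instance] Ultrafilter.mul

/-- A is a multiplicative Δ-set: there is a sequence with x n dividing x m for n < m
and all quotients (x m) / (x n), for n < m, lying in A. -/
def IsDeltaSet (A : Set ℕ+) : Prop :=
  ∃ x : ℕ → ℕ+, ∀ n m : ℕ, n < m → ∃ c ∈ A, x m = x n * c

lemma gt_mem_hyperfilter (n : ℕ) : {m : ℕ | n < m} ∈ (Filter.hyperfilter ℕ : Filter ℕ) := by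
  apply Filter.mem_hyperfilter_of_finite_compl
  have : {m : ℕ | n < m}ᶜ = Set.Iic n := by ext m; simp [not_lt]
  rw [this]; exact Set.finite_Iic n

theorem stmt7 (A : Set ℕ+) :
    IsDeltaSet A ↔ ∃ u : Ultrafilter ℕ+, Dset u ∈ u ∧ quotMem u u A := by
  constructor
  · rintro ⟨x, hx⟩
    set p : Ultrafilter ℕ := Filter.hyperfilter ℕ with hp
    refine ⟨Ultrafilter.map x p, ?_, ?_⟩
    · rw [Ultrafilter.mem_map]
      have : x ⁻¹' Dset (Ultrafilter.map x p) = Set.univ := by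
        ext n
        simp only [Set.mem_preimage, Set.mem_univ, iff_true]
        show mulsOf (x n) ∈ Ultrafilter.map x p
        rw [Ultrafilter.mem_map]
        refine Filter.mem_of_superset (gt_mem_hyperfilter n) ?_
        intro m hm
        obtain ⟨c, _, hc⟩ := hx n m hm
        exact ⟨c, hc⟩
      rw [this]; exact Filter.univ_mem
    · show {y | pmul y A ∈ Ultrafilter.map x p} ∈ Ultrafilter.map x p
      rw [Ultrafilter.mem_map]
      have : x ⁻¹' {y | pmul y A ∈ Ultrafilter.map x p} = Set.univ := by
        ext n
        simp only [Set.mem_preimage, Set.mem_univ, iff_true, Set.mem_setOf_eq]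
        rw [Ultrafilter.mem_map]
        refine Filter.mem_of_superset (gt_mem_hyperfilter n) ?_
        intro m hm
        obtain ⟨c, hcA, hc⟩ := hx n m hm
        exact ⟨c, hcA, hc.symm⟩
      rw [this]; exact Filter.univ_mem
  · rintro ⟨u, _, hA⟩
    classical
    set B : Set ℕ+ := {y | pmul y A ∈ u} with hBdef
    have hB : B ∈ u := hA
    let step : {C : Set ℕ+ // C ∈ u ∧ C ⊆ B} → {C : Set ℕ+ // C ∈ u ∧ C ⊆ B} :=
      fun C =>
        ⟨C.1 ∩ pmul (Filter.nonempty_of_mem C.2.1).some A,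
          Filter.inter_mem C.2.1
            (C.2.2 (Set.Nonempty.some_mem (Filter.nonempty_of_mem C.2.1))),
          Set.inter_subset_left.trans C.2.2⟩
    let sets : ℕ → {C : Set ℕ+ // C ∈ u ∧ C ⊆ B} :=
      fun n => Nat.rec ⟨B, hB, subset_rfl⟩ (fun _ ih => step ih) n
    let x : ℕ → ℕ+ := fun n => (Filter.nonempty_of_mem (sets n).2.1).some
    have hxmem : ∀ n, x n ∈ (sets n).1 :=
      fun n => Set.Nonempty.some_mem _
    have hsucc : ∀ n, (sets (n + 1)).1 = (sets n).1 ∩ pmul (x n) A := fun n => rfl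
    have hkey : ∀ n m, n < m → (sets m).1 ⊆ pmul (x n) A := by
      intro n m
      induction m with
      | zero => omega
      | succ k ih =>
        intro hlt
        rcases Nat.lt_succ_iff_lt_or_eq.mp hlt with h | h
        · exact (hsucc k ▸ Set.inter_subset_left).trans (ih h)
        · subst h; exact hsucc n ▸ Set.inter_subset_right
    refine ⟨x, fun n m hnm => ?_⟩
    obtain ⟨c, hcA, hc⟩ := hkey n m hnm (hxmem m)
    exact ⟨c, hcA, hc.symm⟩
end

section
/- A set A ⊆ ℕ is a multiplicative Δ*-set (meets every multiplicative Δ-set) if and only if A ∈ u/u for every self-divisible ultrafilter u on ℕ. -/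
attribute [local instance] Ultrafilter.mul

open Classical in
noncomputable def pickElt (s : Set ℕ+) : ℕ+ :=
  if h : s.Nonempty then h.choose else 1

lemma pickElt_mem {s : Set ℕ+} (h : s.Nonempty) : pickElt s ∈ s := by
  rw [pickElt]
  split
  · exact h.choose_spec
  · exact absurd h (by assumption)

lemma deltaset_of_quot (u : Ultrafilter ℕ+) (B : Set ℕ+)
    (hT : {x | pmul x B ∈ u} ∈ u) : IsDeltaSet B := by
  set T : Set ℕ+ := {x | pmul x B ∈ u} with hTdef
  let S : ℕ → Set ℕ+ := fun n => Nat.rec T (fun _ Sn => Sn ∩ pmul (pickElt Sn) B) n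
  have hstep : ∀ n, S (n + 1) = S n ∩ pmul (pickElt (S n)) B := fun n => rfl
  have hmono : ∀ n m : ℕ, n ≤ m → S m ⊆ S n := by
    intro n m h
    obtain ⟨k, rfl⟩ := Nat.exists_eq_add_of_le h
    clear h
    induction k with
    | zero => exact subset_rfl
    | succ k ih =>
      have : S (n + (k + 1)) = S (n + k) ∩ pmul (pickElt (S (n + k))) B := hstep (n + k)
      rw [this]
      exact Set.inter_subset_left.trans ih
  have hsubT : ∀ n, S n ⊆ T := fun n => hmono 0 n (Nat.zero_le n)
  have hS : ∀ n, S n ∈ u := by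
    intro n
    induction n with
    | zero => exact hT
    | succ n ih =>
      rw [hstep n]
      have hne : (S n).Nonempty := u.nonempty_of_mem ih
      have : pickElt (S n) ∈ T := hsubT n (pickElt_mem hne)
      exact u.inter_sets ih this
  refine ⟨fun n => pickElt (S n), fun n m hnm => ?_⟩
  have hxm : pickElt (S m) ∈ S m := pickElt_mem (u.nonempty_of_mem (hS m))
  have : pickElt (S m) ∈ S (n + 1) := hmono (n + 1) m hnm hxm
  rw [hstep n] at this
  obtain ⟨c, hc, hceq⟩ := this.2
  exact ⟨c, hc, hceq.symm⟩

theorem stmt8 (A : Set ℕ+) :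
    (∀ B : Set ℕ+, IsDeltaSet B → (A ∩ B).Nonempty) ↔
      (∀ u : Ultrafilter ℕ+, Dset u ∈ u → quotMem u u A) := by
  constructor
  · intro hA u hu
    by_contra hq
    have hcompl : {x : ℕ+ | pmul x A ∈ u}ᶜ ∈ u :=
      (Ultrafilter.compl_mem_iff_notMem).2 hq
    have hT : {x : ℕ+ | pmul x Aᶜ ∈ u} ∈ u := by
      refine u.sets_of_superset (u.inter_sets hu hcompl) ?_
      rintro x ⟨hxD, hxA⟩
      have h1 : mulsOf x ∈ u := hxD
      have h2 : (pmul x A)ᶜ ∈ u := (Ultrafilter.compl_mem_iff_notMem).2 hxA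
      refine u.sets_of_superset (u.inter_sets h1 h2) ?_
      rintro n ⟨⟨c, hc⟩, hn⟩
      refine ⟨c, ?_, hc.symm⟩
      intro hcA
      exact hn ⟨c, hcA, hc.symm⟩
    have hdel : IsDeltaSet Aᶜ := deltaset_of_quot u Aᶜ hT
    obtain ⟨a, haA, haC⟩ := hA Aᶜ hdel
    exact haC haA
  · intro h B hB
    obtain ⟨x, hx⟩ := hB
    let u : Ultrafilter ℕ+ := (Filter.hyperfilter ℕ).map x
    have htail : ∀ n : ℕ, {m : ℕ | n < m} ∈ Filter.hyperfilter ℕ := by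
      intro n
      exact (Filter.hyperfilter ℕ).sets_of_superset
        ((Set.finite_le_nat n).compl_mem_hyperfilter)
        (fun m hm => lt_of_not_ge (by simpa using hm))
    have hDu : Dset u ∈ u := by
      rw [Ultrafilter.mem_map]
      refine (Filter.hyperfilter ℕ).sets_of_superset (htail 0) ?_
      intro n _
      show mulsOf (x n) ∈ u
      rw [Ultrafilter.mem_map]
      refine (Filter.hyperfilter ℕ).sets_of_superset (htail n) ?_
      intro m hm
      obtain ⟨c, _, hceq⟩ := hx n m hm
      exact ⟨c, hceq⟩
    have hq := h u hDu
    rw [quotMem, Ultrafilter.mem_map] at hq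
    obtain ⟨n, hn⟩ := (Filter.hyperfilter ℕ).nonempty_of_mem hq
    have hn' : pmul (x n) A ∈ u := hn
    rw [Ultrafilter.mem_map] at hn'
    obtain ⟨m, hm1, hm2⟩ := (Filter.hyperfilter ℕ).nonempty_of_mem
      ((Filter.hyperfilter ℕ).inter_sets hn' (htail n))
    obtain ⟨a, haA, haeq⟩ := hm1
    obtain ⟨c, hcB, hceq⟩ := hx n m hm2
    have : a = c := mul_left_cancel (haeq.trans hceq)
    exact ⟨a, haA, this ▸ hcB⟩
end

section
/- Let u be a self-divisible ultrafilter on ℕ. Then for every ultrafilter v, v strongly divides u if and only if v strongly divides u·(u/u). Equivalently, D(u) = D(u·(u/u)). -/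
attribute [local instance] Ultrafilter.mul

theorem stmt12 (u : Ultrafilter ℕ+) (hu : Dset u ∈ u)
    (q : Ultrafilter ℕ+) (hq : ∀ A : Set ℕ+, A ∈ q ↔ quotMem u u A) :
    (∀ v : Ultrafilter ℕ+, Dset u ∈ v ↔ Dset (u * q) ∈ v) ∧
      Dset u = Dset (u * q) := by
  have key : Dset u = Dset (u * q) := by
    ext x
    have hmem : mulsOf x ∈ (u * q) ↔ ∀ᶠ a in (u : Filter ℕ+), ∀ᶠ b in (q : Filter ℕ+),
        x ∣ a * b := Ultrafilter.eventually_mul u q (fun n => x ∣ n)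
    constructor
    · intro hx
      -- easy direction: if x ∣ a then x ∣ a*b for all b
      refine hmem.mpr ?_
      filter_upwards [hx] with a ha
      exact Filter.Eventually.of_forall fun b => Dvd.dvd.mul_right ha b
    · intro hx
      have h1 : ∀ᶠ a in (u : Filter ℕ+), {b | x ∣ a * b} ∈ q := hmem.mp hx
      have h2 : (Dset u ∩ {a | {b | x ∣ a * b} ∈ q}) ∈ u := Filter.inter_mem hu h1
      obtain ⟨a, haD, haq⟩ := Filter.nonempty_of_mem h2
      have hquot := (hq _).mp haq
      have h3 : (mulsOf a ∩ {y | pmul y {b | x ∣ a * b} ∈ u}) ∈ u :=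
        Filter.inter_mem haD hquot
      obtain ⟨y, hay, hyu⟩ := Filter.nonempty_of_mem h3
      refine Filter.mem_of_superset hyu ?_
      rintro n ⟨b, hb, rfl⟩
      obtain ⟨c, rfl⟩ := hay
      -- x ∣ a * b and y = a * c, so x ∣ (a*c)*b
      show x ∣ a * c * b
      have : x ∣ a * b := hb
      calc x ∣ a * b := this
        _ ∣ a * c * b := ⟨c, by ring⟩
  exact ⟨fun v => by rw [key], key⟩
end

section
/- Let u be a self-divisible ultrafilter on ℕ and v any ultrafilter strongly dividing u. Then D(u) ∈ u/u; in particular u/v strongly divides u (forward direction: if u is self-divisible then u/v ∣ u). -/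
attribute [local instance] Ultrafilter.mul

theorem stmt13 (u v : Ultrafilter ℕ+) (hu : Dset u ∈ u) (hv : SDvd v u) :
    quotMem u u (Dset u) ∧ quotMem u v (Dset u) := by
  have key : Dset u ⊆ {x | pmul x (Dset u) ∈ u} := by
    intro x hx
    have hsub : mulsOf x ∩ Dset u ⊆ pmul x (Dset u) := by
      rintro n ⟨⟨k, rfl⟩, hn⟩
      exact ⟨k, by
        have : mulsOf (x * k) ⊆ mulsOf k := fun m hm => dvd_trans ⟨x, mul_comm x k⟩ hm
        exact u.toFilter.mem_of_superset hn this, rfl⟩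
    exact u.toFilter.mem_of_superset (u.toFilter.inter_mem hx hu) hsub
  exact ⟨u.toFilter.mem_of_superset hu key, v.toFilter.mem_of_superset hv key⟩
end

section
/- Let u, v be ultrafilters on ℕ with v strongly dividing u. If u/v strongly divides u, then u is self-divisible (D(u) ∈ u). -/
attribute [local instance] Ultrafilter.mul

lemma mulsOf_mono {a b : ℕ+} (h : a ∣ b) : mulsOf b ⊆ mulsOf a :=
  fun _ hn => h.trans hn

open Classical in
noncomputable def Bp (u : Ultrafilter ℕ+) (q : ℕ+) : Set ℕ+ :=
  if (∃ k, mulsOf (q ^ k) ∉ u) then (mulsOf (q ^ sInf {k | mulsOf (q ^ k) ∉ u}))ᶜ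
  else Set.univ

lemma Bp_mem (u : Ultrafilter ℕ+) (q : ℕ+) : Bp u q ∈ u := by
  unfold Bp
  split
  · rename_i h
    exact Ultrafilter.compl_mem_iff_notMem.mpr (Nat.sInf_mem h)
  · exact Filter.univ_mem

lemma Bp_spec {u : Ultrafilter ℕ+} {q y : ℕ+} (hy : y ∈ Bp u q) {k : ℕ}
    (hk : q ^ k ∣ y) : mulsOf (q ^ k) ∈ u := by
  unfold Bp at hy
  split at hy
  · by_contra hcon
    exact hy ((pow_dvd_pow q (Nat.sInf_le hcon)).trans hk)
  · rename_i h
    exact not_not.mp fun hc => h ⟨k, hc⟩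

lemma mulsOf_mem_of_primes (u : Ultrafilter ℕ+) (n : ℕ+)
    (h : ∀ q : ℕ+, ((q : ℕ)).Prime → mulsOf (q ^ (n : ℕ).factorization (q : ℕ)) ∈ u) :
    mulsOf n ∈ u := by
  have hmem : (⋂ p ∈ (n : ℕ).primeFactors, mulsOf (p.toPNat' ^ (n : ℕ).factorization p)) ∈ u := by
    refine (Filter.biInter_finset_mem _).mpr fun p hp => ?_
    have hprime : p.Prime := Nat.prime_of_mem_primeFactors hp
    have := h p.toPNat' (by rwa [PNat.toPNat'_coe hprime.pos])
    rwa [PNat.toPNat'_coe hprime.pos] at this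
  refine u.toFilter.mem_of_superset hmem fun m hm => ?_
  simp only [Set.mem_iInter] at hm
  show n ∣ m
  rw [PNat.dvd_iff, ← Nat.factorization_le_iff_dvd n.ne_zero m.ne_zero]
  intro p
  by_cases hp : p ∈ (n : ℕ).primeFactors
  · have hprime : p.Prime := Nat.prime_of_mem_primeFactors hp
    have hdvd : p.toPNat' ^ (n : ℕ).factorization p ∣ m := hm p hp
    rw [PNat.dvd_iff] at hdvd
    rw [PNat.pow_coe, PNat.toPNat'_coe hprime.pos] at hdvd
    exact (Nat.Prime.pow_dvd_iff_le_factorization hprime m.ne_zero).mp hdvd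
  · rw [← Nat.support_factorization, Finsupp.notMem_support_iff] at hp
    simp [hp]

theorem stmt14 (u v : Ultrafilter ℕ+) (hv : SDvd v u)
    (h : quotMem u v (Dset u)) : Dset u ∈ u := by
  obtain ⟨x, hx1, hx2⟩ := Filter.nonempty_of_mem (v.toFilter.inter_mem hv h)
  -- hx1 : x ∈ Dset u, hx2 : pmul x (Dset u) ∈ u
  have hB : (⋂ p ∈ (x : ℕ).primeFactors, Bp u p.toPNat') ∈ u :=
    (Filter.biInter_finset_mem _).mpr fun p _ => Bp_mem u p.toPNat'
  have hT : (pmul x (Dset u) ∩ ⋂ p ∈ (x : ℕ).primeFactors, Bp u p.toPNat') ∈ u :=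
    u.toFilter.inter_mem hx2 hB
  refine u.toFilter.mem_of_superset hT fun y hy => ?_
  obtain ⟨⟨d, hd, rfl⟩, hyB⟩ := hy
  simp only [Set.mem_iInter] at hyB
  show mulsOf (x * d) ∈ u
  refine mulsOf_mem_of_primes u (x * d) fun q hq => ?_
  set k := ((x * d : ℕ+) : ℕ).factorization (q : ℕ) with hk
  have hkdvd : q ^ k ∣ x * d := by
    rw [PNat.dvd_iff, PNat.pow_coe]
    exact Nat.ordProj_dvd _ _
  by_cases hqx : (q : ℕ) ∣ (x : ℕ)
  · have hqmem : (q : ℕ) ∈ (x : ℕ).primeFactors :=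
      Nat.mem_primeFactors.mpr ⟨hq, hqx, x.ne_zero⟩
    have hyq := hyB (q : ℕ) hqmem
    have hq' : ((q : ℕ)).toPNat' = q := PNat.coe_toPNat' q
    rw [hq'] at hyq
    exact Bp_spec hyq hkdvd
  · -- q does not divide x, so k = factorization of d; q^k divides d
    have hxz : ((x : ℕ)) ≠ 0 := x.ne_zero
    have hdz : ((d : ℕ)) ≠ 0 := d.ne_zero
    have hkval : k = (d : ℕ).factorization (q : ℕ) := by
      rw [hk, PNat.mul_coe, Nat.factorization_mul hxz hdz]
      simp [Nat.factorization_eq_zero_of_not_dvd hqx]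
    have hdvd : q ^ k ∣ d := by
      rw [PNat.dvd_iff, PNat.pow_coe, hkval]
      exact Nat.ordProj_dvd _ _
    exact u.toFilter.mem_of_superset hd (mulsOf_mono hdvd)
end

section
/- Let v be a prime ultrafilter on ℕ (the set of primes belongs to v) and u₁, u₂ ultrafilters on ℕ. If v strongly divides u₁·u₂ then v strongly divides u₁ or v strongly divides u₂. In fact P ∩ D(u₁·u₂) ⊆ D(u₁) ∪ D(u₂). -/
attribute [local instance] Ultrafilter.mul

lemma key (u₁ u₂ : Ultrafilter ℕ+) (p : ℕ+) (hp : (p : ℕ).Prime)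
    (h : mulsOf p ∈ u₁ * u₂) : mulsOf p ∈ u₁ ∨ mulsOf p ∈ u₂ := by
  by_contra hc
  push_neg at hc
  obtain ⟨h1, h2⟩ := hc
  have h1' : {x : ℕ+ | ¬ p ∣ x} ∈ u₁ := (Ultrafilter.compl_mem_iff_notMem.mpr h1)
  have h' : {x : ℕ+ | {y : ℕ+ | p ∣ x * y} ∈ u₂} ∈ u₁ := h
  obtain ⟨x, hx1, hx2⟩ := (Filter.nonempty_of_mem (u₁.toFilter.inter_mem h1' h'))
  apply h2
  have : {y : ℕ+ | p ∣ x * y} ⊆ mulsOf p := by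
    intro y hy
    have : (p : ℕ) ∣ (x : ℕ) * (y : ℕ) := by
      have := (PNat.dvd_iff.mp hy)
      simpa using this
    rcases (Nat.Prime.dvd_mul hp).mp this with h | h
    · exact absurd (PNat.dvd_iff.mpr h) hx1
    · exact PNat.dvd_iff.mpr h
  exact u₂.toFilter.mem_of_superset hx2 this

theorem stmt15 (v u₁ u₂ : Ultrafilter ℕ+) (hv : {p : ℕ+ | (p : ℕ).Prime} ∈ v) :
    (SDvd v (u₁ * u₂) → SDvd v u₁ ∨ SDvd v u₂) ∧
      {p : ℕ+ | (p : ℕ).Prime} ∩ Dset (u₁ * u₂) ⊆ Dset u₁ ∪ Dset u₂ := by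
  have hsub : {p : ℕ+ | (p : ℕ).Prime} ∩ Dset (u₁ * u₂) ⊆ Dset u₁ ∪ Dset u₂ := by
    rintro p ⟨hp, hd⟩
    exact key u₁ u₂ p hp hd
  refine ⟨fun h => ?_, hsub⟩
  have : Dset u₁ ∪ Dset u₂ ∈ v :=
    v.toFilter.mem_of_superset (v.toFilter.inter_mem hv h) hsub
  exact (Ultrafilter.union_mem_iff.mp this)
end

section
/- Let v be an ultrafilter on ℕ containing the set S of squarefree numbers and u any ultrafilter on ℕ. Then v strongly divides u·u if and only if v strongly divides u. In fact S ∩ D(u·u) ⊆ D(u). -/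
attribute [local instance] Ultrafilter.mul

/-- For a prime `p`, if the multiples of `p` are in `u*u`, they are in `u`. -/
lemma prime_key (u : Ultrafilter ℕ+) (p : ℕ) (hp : p.Prime)
    (h : {n : ℕ+ | p ∣ (n : ℕ)} ∈ u * u) : {n : ℕ+ | p ∣ (n : ℕ)} ∈ u := by
  by_contra hc
  have hcompl : {n : ℕ+ | p ∣ (n : ℕ)}ᶜ ∈ u := Ultrafilter.compl_mem_iff_notMem.2 hc
  have h2 : {m : ℕ+ | {n : ℕ+ | p ∣ ((m * n : ℕ+) : ℕ)} ∈ u} ∈ u :=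
    (Ultrafilter.eventually_mul u u _).1 h
  obtain ⟨m, hm1, hm2⟩ := Ultrafilter.nonempty_of_mem (Filter.inter_mem h2 hcompl)
  apply hc
  refine u.mem_of_superset hm1 ?_
  intro n hn
  simp only [Set.mem_setOf_eq, PNat.mul_coe] at hn ⊢
  exact (hp.dvd_mul.1 hn).resolve_left hm2

/-- For squarefree `x`, `mulsOf x ∈ u*u → mulsOf x ∈ u`. -/
lemma sqfree_key (u : Ultrafilter ℕ+) (x : ℕ+) (hx : Squarefree (x : ℕ))
    (h : mulsOf x ∈ u * u) : mulsOf x ∈ u := by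
  have hmain : ∀ p ∈ (x : ℕ).primeFactors, {n : ℕ+ | p ∣ (n : ℕ)} ∈ u := by
    intro p hpmem
    have hp := Nat.prime_of_mem_primeFactors hpmem
    have hpd : p ∣ (x : ℕ) := Nat.dvd_of_mem_primeFactors hpmem
    apply prime_key u p hp
    refine (u * u).mem_of_superset h ?_
    intro n hn
    exact hpd.trans (PNat.dvd_iff.1 hn)
  have hInt : (⋂ p ∈ (x : ℕ).primeFactors, {n : ℕ+ | p ∣ (n : ℕ)}) ∈ u :=
    (Filter.biInter_finset_mem _).2 hmain
  refine u.mem_of_superset hInt ?_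
  intro n hn
  simp only [Set.mem_iInter, Set.mem_setOf_eq] at hn
  have : (x : ℕ) ∣ (n : ℕ) := by
    rw [← Nat.prod_primeFactors_of_squarefree hx]
    exact Finset.prod_primes_dvd _ (fun p hp => (Nat.prime_of_mem_primeFactors hp).prime)
      (fun p hp => hn p hp)
  exact PNat.dvd_iff.2 this

lemma Dset_mono (u : Ultrafilter ℕ+) : Dset u ⊆ Dset (u * u) := by
  intro x hx
  show mulsOf x ∈ u * u
  refine (Ultrafilter.eventually_mul u u _).2 ?_
  refine u.mem_of_superset hx ?_
  intro m hm
  exact Filter.Eventually.of_forall fun n => hm.mul_right n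

theorem stmt16 (v u : Ultrafilter ℕ+) (hv : {x : ℕ+ | Squarefree (x : ℕ)} ∈ v) :
    (SDvd v (u * u) ↔ SDvd v u) ∧
      {x : ℕ+ | Squarefree (x : ℕ)} ∩ Dset (u * u) ⊆ Dset u := by
  have hsub : {x : ℕ+ | Squarefree (x : ℕ)} ∩ Dset (u * u) ⊆ Dset u := by
    rintro x ⟨hx1, hx2⟩
    exact sqfree_key u x hx1 hx2
  refine ⟨⟨fun h => ?_, fun h => v.mem_of_superset h (Dset_mono u)⟩, hsub⟩
  exact v.mem_of_superset (Filter.inter_mem hv h) hsub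
end

section
/- Let f : ℕ → ℕ be a multiplicative homomorphism (f(ab) = f(a)f(b) for all a, b). Then for all ultrafilters u, v with v strongly dividing u, every member of the pushforward f̃(u/v) belongs to f̃(u)/f̃(v); hence f̃(u/v) = f̃(u)/f̃(v). -/
attribute [local instance] Ultrafilter.mul

lemma pmul_union (x : ℕ+) (A B : Set ℕ+) : pmul x (A ∪ B) = pmul x A ∪ pmul x B :=
  Set.image_union _ _ _

lemma pmul_inter_compl (x : ℕ+) (A : Set ℕ+) : pmul x A ∩ pmul x Aᶜ = ∅ := by
  ext y
  simp only [Set.mem_inter_iff, Set.mem_empty_iff_false, iff_false, pmul, Set.mem_image]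
  rintro ⟨⟨a, ha, rfl⟩, ⟨b, hb, hab⟩⟩
  exact hb (by simpa [mul_left_cancel hab] using ha)

lemma pmul_union_compl (x : ℕ+) (A : Set ℕ+) : pmul x A ∪ pmul x Aᶜ = mulsOf x := by
  rw [← pmul_union, Set.union_compl_self]
  ext y
  simp only [pmul, Set.image_univ, Set.mem_range, mulsOf, Set.mem_setOf_eq]
  exact ⟨fun ⟨a, ha⟩ => ⟨a, ha.symm⟩, fun ⟨a, ha⟩ => ⟨a, ha.symm⟩⟩

lemma fwd (f : ℕ+ → ℕ+) (hf : ∀ a b : ℕ+, f (a * b) = f a * f b)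
    (u v : Ultrafilter ℕ+) (A : Set ℕ+) (h : quotMem u v (f ⁻¹' A)) :
    quotMem (Ultrafilter.map f u) (Ultrafilter.map f v) A := by
  unfold quotMem at *
  rw [Ultrafilter.mem_map]
  refine Filter.mem_of_superset h ?_
  intro x hx
  simp only [Set.mem_preimage, Set.mem_setOf_eq] at *
  rw [Ultrafilter.mem_map]
  refine Filter.mem_of_superset hx ?_
  rintro y ⟨a, ha, rfl⟩
  exact ⟨f a, ha, (hf x a).symm⟩

theorem stmt18 (f : ℕ+ → ℕ+) (hf : ∀ a b : ℕ+, f (a * b) = f a * f b) :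
    ∀ u v : Ultrafilter ℕ+, SDvd v u →
      (∀ A : Set ℕ+, quotMem u v (f ⁻¹' A) →
        quotMem (Ultrafilter.map f u) (Ultrafilter.map f v) A) ∧
      {A : Set ℕ+ | quotMem u v (f ⁻¹' A)} =
        {A : Set ℕ+ | quotMem (Ultrafilter.map f u) (Ultrafilter.map f v) A} := by
  intro u v hsd
  refine ⟨fun A => fwd f hf u v A, ?_⟩
  ext A
  simp only [Set.mem_setOf_eq]
  refine ⟨fwd f hf u v A, fun h2 => ?_⟩
  by_contra hc
  -- complement trick
  have hcompl : quotMem u v (f ⁻¹' Aᶜ) := by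
    unfold quotMem at hc ⊢
    have hcv : {x | pmul x (f ⁻¹' A) ∈ u}ᶜ ∈ v := (Ultrafilter.compl_mem_iff_notMem).2 hc
    refine Filter.mem_of_superset (Filter.inter_mem hsd hcv) ?_
    rintro x ⟨hxD, hxA⟩
    simp only [Set.mem_compl_iff, Set.mem_setOf_eq] at *
    have hun : pmul x (f ⁻¹' A) ∪ pmul x (f ⁻¹' A)ᶜ ∈ u := by
      rw [pmul_union_compl]; exact hxD
    rcases Ultrafilter.union_mem_iff.1 hun with h | h
    · exact absurd h hxA
    · simpa [Set.preimage_compl] using h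
  have h2c := fwd f hf u v Aᶜ hcompl
  unfold quotMem at h2 h2c
  have hmem := Filter.inter_mem h2 h2c
  rcases Ultrafilter.nonempty_of_mem hmem with ⟨y, hyA, hyAc⟩
  simp only [Set.mem_setOf_eq] at hyA hyAc
  have := Filter.inter_mem hyA hyAc
  rw [pmul_inter_compl] at this
  exact Ultrafilter.empty_notMem this
end
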